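/- arXiv:0812.0172 — 5 statements merged into one kernel-verified Lean document; each statement's English description precedes it below -/
import Mathlib

section
/- Let M, n, m be positive integers with n < M and m < M. Let T be an invertible M×M real matrix written in block form T = [[A, B], [G, D]] where A has size n×m (so B has size n×(M−m), G has size (M−n)×m, and D has size (M−n)×(M−m)), and write T⁻¹ = [[E, C], [H, F]] where E has size m×n (so C has size m×(M−n)). Then the nullity of B equals the nullity of C, i.e., dim ker B = dim ker C, where B and C are viewed as linear maps. -/
lemma nullity_le_aux {p q r s : Type*} [Fintype p] [Fintype q] [Fintype r] [Fintype s]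
    [DecidableEq p] [DecidableEq q] [DecidableEq r] [DecidableEq s]
    (A : Matrix p q ℝ) (B : Matrix p s ℝ) (G : Matrix r q ℝ) (D : Matrix r s ℝ)
    (E : Matrix q p ℝ) (C : Matrix q r ℝ) (H : Matrix s p ℝ) (F : Matrix s r ℝ)
    (h2 : Matrix.fromBlocks E C H F * Matrix.fromBlocks A B G D = 1) :
    Module.finrank ℝ (LinearMap.ker B.mulVecLin) ≤
      Module.finrank ℝ (LinearMap.ker C.mulVecLin) := by
  have hEB : E * B + C * D = 0 := by
    have h2' := h2
    rw [Matrix.fromBlocks_multiply, ← Matrix.fromBlocks_one] at h2'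
    have := congrArg Matrix.toBlocks₁₂ h2'
    simpa only [Matrix.toBlocks_fromBlocks₁₂] using this
  -- the map x ↦ D *ᵥ x sends ker B into ker C
  have hmap : ∀ x ∈ LinearMap.ker B.mulVecLin,
      D.mulVecLin x ∈ LinearMap.ker C.mulVecLin := by
    intro x hx
    simp only [LinearMap.mem_ker, Matrix.mulVecLin_apply] at hx ⊢
    have : (E * B + C * D).mulVec x = 0 := by rw [hEB]; simp
    rwa [Matrix.add_mulVec, ← Matrix.mulVec_mulVec, ← Matrix.mulVec_mulVec, hx,
      Matrix.mulVec_zero, zero_add] at this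
  have hinj : Function.Injective (D.mulVecLin.restrict hmap) := by
    intro ⟨x, hx⟩ ⟨y, hy⟩ hxy
    have hDeq : D.mulVec x = D.mulVec y := by
      have := congrArg (Subtype.val) hxy
      simpa [LinearMap.restrict_apply] using this
    simp only [LinearMap.mem_ker, Matrix.mulVecLin_apply] at hx hy
    have hB : B.mulVec (x - y) = 0 := by
      rw [Matrix.mulVec_sub, hx, hy, sub_self]
    have hD : D.mulVec (x - y) = 0 := by
      rw [Matrix.mulVec_sub, hDeq, sub_self]
    have hT : (Matrix.fromBlocks A B G D).mulVec (Sum.elim 0 (x - y)) = 0 := by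
      funext i
      cases i with
      | inl i =>
        have : (Matrix.fromBlocks A B G D).mulVec (Sum.elim 0 (x - y)) (Sum.inl i)
            = (A.mulVec 0 + B.mulVec (x - y)) i := by
          rw [Matrix.fromBlocks_mulVec]; simp
        rw [this, hB]; simp
      | inr i =>
        have : (Matrix.fromBlocks A B G D).mulVec (Sum.elim 0 (x - y)) (Sum.inr i)
            = (G.mulVec 0 + D.mulVec (x - y)) i := by
          rw [Matrix.fromBlocks_mulVec]; simp
        rw [this, hD]; simp
    have hxy0 : Sum.elim (0 : q → ℝ) (x - y) = 0 := by
      have := congrArg ((Matrix.fromBlocks E C H F).mulVec) hT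
      rwa [Matrix.mulVec_mulVec, h2, Matrix.one_mulVec, Matrix.mulVec_zero] at this
    have : x - y = 0 := by
      funext i
      have := congrFun hxy0 (Sum.inr i)
      simpa using this
    exact Subtype.ext (sub_eq_zero.mp this)
  exact LinearMap.finrank_le_finrank_of_injective hinj

/-- **The Nullity Theorem.** If `T = [[A, B], [G, D]]` is an invertible `M × M` real matrix
(with `A` of size `n × m`) and `T⁻¹ = [[E, C], [H, F]]` (with `E` of size `m × n`), then
the nullity of `B` equals the nullity of `C`. -/
theorem nullity_theorem (M n m : ℕ) (hn : 0 < n) (hm : 0 < m) (hnM : n < M) (hmM : m < M)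
    (A : Matrix (Fin n) (Fin m) ℝ) (B : Matrix (Fin n) (Fin (M - m)) ℝ)
    (G : Matrix (Fin (M - n)) (Fin m) ℝ) (D : Matrix (Fin (M - n)) (Fin (M - m)) ℝ)
    (E : Matrix (Fin m) (Fin n) ℝ) (C : Matrix (Fin m) (Fin (M - n)) ℝ)
    (H : Matrix (Fin (M - m)) (Fin n) ℝ) (F : Matrix (Fin (M - m)) (Fin (M - n)) ℝ)
    (h1 : Matrix.fromBlocks A B G D * Matrix.fromBlocks E C H F = 1)
    (h2 : Matrix.fromBlocks E C H F * Matrix.fromBlocks A B G D = 1) :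
    Module.finrank ℝ (LinearMap.ker B.mulVecLin) =
      Module.finrank ℝ (LinearMap.ker C.mulVecLin) := by
  exact le_antisymm (nullity_le_aux A B G D E C H F h2)
    (nullity_le_aux E C H F A B G D h1)
end

section
/- Let M, n, p be positive integers with n + p < M. Let K be an invertible M×M real matrix written in block form K = [[A, B], [G, D]] where A has size n×(n+p) (so B has size n×(M−n−p)), and write K⁻¹ = [[E, C], [H, F]] where E has size (n+p)×n (so C has size (n+p)×(M−n)). Then rank C = rank B + p. -/
open Matrix LinearMap Module

/-- **Rank form of the Nullity Theorem.** If `K = [[A, B], [G, D]]` is an invertible `M × M`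
real matrix with `A` of size `n × (n+p)`, and `K⁻¹ = [[E, C], [H, F]]` with `E` of size
`(n+p) × n`, then `rank C = rank B + p`. -/
theorem rank_nullity_theorem (M n p : ℕ) (hn : 0 < n) (hp : 0 < p) (hM : n + p < M)
    (A : Matrix (Fin n) (Fin (n + p)) ℝ) (B : Matrix (Fin n) (Fin (M - n - p)) ℝ)
    (G : Matrix (Fin (M - n)) (Fin (n + p)) ℝ) (D : Matrix (Fin (M - n)) (Fin (M - n - p)) ℝ)
    (E : Matrix (Fin (n + p)) (Fin n) ℝ) (C : Matrix (Fin (n + p)) (Fin (M - n)) ℝ)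
    (H : Matrix (Fin (M - n - p)) (Fin n) ℝ) (F : Matrix (Fin (M - n - p)) (Fin (M - n)) ℝ)
    (h1 : Matrix.fromBlocks A B G D * Matrix.fromBlocks E C H F = 1)
    (h2 : Matrix.fromBlocks E C H F * Matrix.fromBlocks A B G D = 1) :
    C.rank = B.rank + p := by
  rw [Matrix.fromBlocks_multiply, ← Matrix.fromBlocks_one] at h1 h2
  have hAC : A * C + B * F = 0 := by
    have h := congrArg Matrix.toBlocks₁₂ h1
    ext i j
    have := congrFun (congrFun h i) j
    simpa [Matrix.toBlocks₁₂, Matrix.one_apply] using this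
  have hGC : G * C + D * F = 1 := by
    have h := congrArg Matrix.toBlocks₂₂ h1
    ext i j
    have := congrFun (congrFun h i) j
    simpa [Matrix.toBlocks₂₂, Matrix.one_apply] using this
  have hEB : E * B + C * D = 0 := by
    have h := congrArg Matrix.toBlocks₁₂ h2
    ext i j
    have := congrFun (congrFun h i) j
    simpa [Matrix.toBlocks₁₂, Matrix.one_apply] using this
  have hHB : H * B + F * D = 1 := by
    have h := congrArg Matrix.toBlocks₂₂ h2
    ext i j
    have := congrFun (congrFun h i) j
    simpa [Matrix.toBlocks₂₂, Matrix.one_apply] using this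
  -- F maps ker C into ker B, D maps ker B into ker C, inverse to each other
  have hF : ∀ x ∈ ker C.mulVecLin, F.mulVecLin x ∈ ker B.mulVecLin := by
    intro x hx
    simp only [mem_ker, mulVecLin_apply] at hx ⊢
    have : (A * C + B * F) *ᵥ x = 0 := by rw [hAC, Matrix.zero_mulVec]
    rw [Matrix.add_mulVec, ← Matrix.mulVec_mulVec, ← Matrix.mulVec_mulVec, hx,
      Matrix.mulVec_zero, zero_add] at this
    exact this
  have hD : ∀ y ∈ ker B.mulVecLin, D.mulVecLin y ∈ ker C.mulVecLin := by
    intro y hy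
    simp only [mem_ker, mulVecLin_apply] at hy ⊢
    have : (E * B + C * D) *ᵥ y = 0 := by rw [hEB, Matrix.zero_mulVec]
    rw [Matrix.add_mulVec, ← Matrix.mulVec_mulVec, ← Matrix.mulVec_mulVec, hy,
      Matrix.mulVec_zero, zero_add] at this
    exact this
  have hDF : ∀ x ∈ ker C.mulVecLin, D *ᵥ (F *ᵥ x) = x := by
    intro x hx
    simp only [mem_ker, mulVecLin_apply] at hx
    have : (G * C + D * F) *ᵥ x = x := by rw [hGC, Matrix.one_mulVec]
    rwa [Matrix.add_mulVec, ← Matrix.mulVec_mulVec, ← Matrix.mulVec_mulVec, hx,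
      Matrix.mulVec_zero, zero_add] at this
  have hFD : ∀ y ∈ ker B.mulVecLin, F *ᵥ (D *ᵥ y) = y := by
    intro y hy
    simp only [mem_ker, mulVecLin_apply] at hy
    have : (H * B + F * D) *ᵥ y = y := by rw [hHB, Matrix.one_mulVec]
    rwa [Matrix.add_mulVec, ← Matrix.mulVec_mulVec, ← Matrix.mulVec_mulVec, hy,
      Matrix.mulVec_zero, zero_add] at this
  let e : (ker C.mulVecLin) ≃ₗ[ℝ] (ker B.mulVecLin) :=
    LinearEquiv.ofLinear (F.mulVecLin.restrict hF) (D.mulVecLin.restrict hD)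
      (LinearMap.ext fun y => Subtype.ext (by
        simpa [LinearMap.restrict_apply] using hFD y.1 y.2))
      (LinearMap.ext fun x => Subtype.ext (by
        simpa [LinearMap.restrict_apply] using hDF x.1 x.2))
  have hker : finrank ℝ (ker C.mulVecLin) = finrank ℝ (ker B.mulVecLin) := e.finrank_eq
  have hC := C.mulVecLin.finrank_range_add_finrank_ker
  have hB := B.mulVecLin.finrank_range_add_finrank_ker
  rw [Module.finrank_fin_fun] at hC hB
  have hCr : C.rank = finrank ℝ (range C.mulVecLin) := rfl
  have hBr : B.rank = finrank ℝ (range B.mulVecLin) := rfl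
  omega
end

section
/- Let M, n, p be positive integers with n + p < M. Let K = (k_{ij}) be an invertible M×M real matrix such that k_{ij} = 0 whenever j − i > p (in particular this holds if K is banded of bandwidth p, i.e., k_{ij} = 0 whenever |i−j| > p). Let C be the submatrix of K⁻¹ consisting of rows 1,…,n+p and columns n+1,…,M. Then rank C ≤ p. -/
/-- If `K` is an invertible `M × M` real matrix with `K i j = 0` whenever `j - i > p`
(in particular if `K` is banded of bandwidth `p`), then the submatrix of `K⁻¹` formed by
rows `1, …, n+p` and columns `n+1, …, M` has rank at most `p`. -/
theorem rank_offdiag_block_le (M n p : ℕ) (hn : 0 < n) (hp : 0 < p) (hM : n + p < M)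
    (K : Matrix (Fin M) (Fin M) ℝ) (hK : IsUnit K)
    (hband : ∀ i j : Fin M, (i : ℕ) + p < (j : ℕ) → K i j = 0) :
    (K⁻¹.submatrix
        (fun i : Fin (n + p) => (⟨(i : ℕ), lt_trans i.isLt hM⟩ : Fin M))
        (fun j : Fin (M - n) => (⟨n + (j : ℕ), by have := j.isLt; omega⟩ : Fin M))).rank
      ≤ p := by
  classical
  have hdet : IsUnit K.det := (Matrix.isUnit_iff_isUnit_det K).mp hK
  set C : Matrix (Fin (n + p)) (Fin (M - n)) ℝ :=
    K⁻¹.submatrix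
        (fun i : Fin (n + p) => (⟨(i : ℕ), lt_trans i.isLt hM⟩ : Fin M))
        (fun j : Fin (M - n) => (⟨n + (j : ℕ), by have := j.isLt; omega⟩ : Fin M)) with hC
  have hnM : n ≤ M := by omega
  have hnpM : n + p ≤ M := by omega
  let er : Fin n ↪ Fin M := Fin.castLEEmb hnM
  let ec : Fin (n + p) ↪ Fin M := Fin.castLEEmb hnpM
  let B : Matrix (Fin n) (Fin (n + p)) ℝ := K.submatrix er ec
  have hrow0 : ∀ (i : Fin n) (l : Fin M), n + p ≤ (l : ℕ) → K (er i) l = 0 := by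
    intro i l hl
    refine hband _ _ ?_
    have : (er i : ℕ) = (i : ℕ) := rfl
    omega
  have hmem : ∀ l : Fin M, (l : ℕ) < n + p → l ∈ Finset.univ.map ec := by
    intro l hl
    exact Finset.mem_map.mpr ⟨⟨(l : ℕ), hl⟩, Finset.mem_univ _, Fin.ext rfl⟩
  -- sum extension lemma
  have hsumext : ∀ (i : Fin n) (f : Fin M → ℝ),
      (∑ l : Fin (n + p), K (er i) (ec l) * f (ec l)) = ∑ l : Fin M, K (er i) l * f l := by
    intro i f
    rw [← Finset.sum_map Finset.univ ec (fun l => K (er i) l * f l)]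
    apply Finset.sum_subset (Finset.subset_univ _)
    intro l _ hl
    have hle : n + p ≤ (l : ℕ) := by
      by_contra h
      exact hl (hmem l (by omega))
    rw [hrow0 i l hle, zero_mul]
  have hBC : B * C = 0 := by
    ext i j
    simp only [Matrix.mul_apply, Matrix.zero_apply, hC, Matrix.submatrix_apply, B]
    have heq : ∀ l : Fin (n + p),
        (⟨(l : ℕ), lt_trans l.isLt hM⟩ : Fin M) = ec l := fun l => rfl
    calc (∑ l : Fin (n + p), K (er i) (ec l) * K⁻¹ (⟨(l : ℕ), lt_trans l.isLt hM⟩ : Fin M)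
            ⟨n + (j : ℕ), by have := j.isLt; omega⟩)
        = ∑ l : Fin M, K (er i) l * K⁻¹ l ⟨n + (j : ℕ), by have := j.isLt; omega⟩ := by
          simp_rw [heq]
          exact hsumext i (fun l => K⁻¹ l ⟨n + (j : ℕ), by have := j.isLt; omega⟩)
      _ = (K * K⁻¹) (er i) ⟨n + (j : ℕ), by have := j.isLt; omega⟩ := by
          rw [Matrix.mul_apply]
      _ = 0 := by
          rw [Matrix.mul_nonsing_inv K hdet]
          refine Matrix.one_apply_ne ?_
          intro h
          have := congrArg Fin.val h
          have hi : (er i : ℕ) = (i : ℕ) := rfl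
          simp only [hi] at this
          omega
  have hsub : LinearMap.range C.mulVecLin ≤ LinearMap.ker B.mulVecLin := by
    rintro _ ⟨x, rfl⟩
    rw [LinearMap.mem_ker]
    simp only [Matrix.mulVecLin_apply]
    rw [Matrix.mulVec_mulVec, hBC, Matrix.zero_mulVec]
  -- B has rank n
  have hBrank : B.rank = n := by
    rw [← Matrix.rank_transpose]
    have hinj : Function.Injective (Matrix.mulVecLin B.transpose) := by
      rw [← LinearMap.ker_eq_bot, LinearMap.ker_eq_bot']
      intro x hx
      have hx' : ∀ l : Fin (n + p), (∑ i : Fin n, K (er i) (ec l) * x i) = 0 := by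
        intro l
        have := congrFun (congrArg (fun v => v) hx) l
        simpa [Matrix.mulVecLin_apply, Matrix.mulVec, dotProduct, B,
          Matrix.transpose_apply, mul_comm] using congrFun hx l
      let y : Fin M → ℝ := fun i => if h : (i : ℕ) < n then x ⟨(i : ℕ), h⟩ else 0
      have hyx : ∀ i : Fin n, y (er i) = x i := by
        intro i
        simp only [y]
        rw [dif_pos (show ((er i : Fin M) : ℕ) < n from i.isLt)]
        exact congrArg x (Fin.ext rfl)
      have hsum : ∀ j : Fin M, (∑ i : Fin M, K i j * y i) = ∑ i : Fin n, K (er i) j * x i := by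
        intro j
        rw [Finset.sum_congr rfl (fun (i : Fin n) _ => by rw [← hyx i] :
          ∀ i ∈ Finset.univ, K (er i) j * x i = K (er i) j * y (er i)),
          ← Finset.sum_map Finset.univ er (fun i => K i j * y i)]
        symm
        apply Finset.sum_subset (Finset.subset_univ _)
        intro i _ hi
        have hle : n ≤ (i : ℕ) := by
          by_contra h
          push_neg at h
          exact hi (Finset.mem_map.mpr ⟨⟨(i : ℕ), h⟩, Finset.mem_univ _, Fin.ext rfl⟩)
        have : y i = 0 := by simp [y, Nat.not_lt.mpr hle]
        rw [this, mul_zero]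
      have hKy : K.transpose.mulVec y = 0 := by
        ext j
        simp only [Matrix.mulVec, dotProduct, Matrix.transpose_apply, Pi.zero_apply]
        rw [hsum j]
        by_cases hj : (j : ℕ) < n + p
        · have : j = ec ⟨(j : ℕ), hj⟩ := Fin.ext rfl
          rw [this]
          exact hx' _
        · apply Finset.sum_eq_zero
          intro i _
          rw [hrow0 i j (by omega), zero_mul]
      have hKTdet : IsUnit K.transpose.det := by rwa [Matrix.det_transpose]
      have hy0 : y = 0 := by
        have h1 : (K.transpose)⁻¹.mulVec (K.transpose.mulVec y) = y := by
          rw [Matrix.mulVec_mulVec, Matrix.nonsing_inv_mul _ hKTdet, Matrix.one_mulVec]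
        rw [hKy, Matrix.mulVec_zero] at h1
        exact h1.symm
      ext i
      rw [← hyx i, hy0]
      rfl
    have h1 := LinearMap.finrank_range_of_inj hinj
    show Module.finrank ℝ (LinearMap.range B.transpose.mulVecLin) = n
    rw [h1]
    simp
  -- conclude
  have hCrank : C.rank ≤ Module.finrank ℝ (LinearMap.ker B.mulVecLin) := by
    show Module.finrank ℝ (LinearMap.range C.mulVecLin) ≤ _
    exact Submodule.finrank_mono hsub
  have hker : Module.finrank ℝ (LinearMap.ker B.mulVecLin) = p := by
    have h2 := LinearMap.finrank_range_add_finrank_ker B.mulVecLin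
    have h3 : Module.finrank ℝ (LinearMap.range B.mulVecLin) = B.rank := rfl
    rw [h3, hBrank] at h2
    simp only [Module.finrank_fintype_fun_eq_card, Fintype.card_fin] at h2
    omega
  omega
end

section
/- Let M, n, p be positive integers with n + p < M. Let A (size n×(n+p)), G (size (M−n)×(n+p)), D (size (M−n)×(M−n−p)) be real matrices such that K₀ = [[A, 0], [G, D]] is invertible. Let B be an n×(M−n−p) real matrix with ‖B‖·‖K₀⁻¹‖ < 1, and set K = [[A, B], [G, D]]. Write K⁻¹ = [[E, C], [H, F]], where C has size (n+p)×(M−n). Then σ_{p+1}(C) ≤ ‖K₀⁻¹‖²·‖B‖ / (1 − ‖K₀⁻¹‖·‖B‖), where σ_{p+1}(C) denotes the (p+1)-st largest singular value of C. -/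
/-- The spectral (operator) norm of a real matrix: its operator norm as a linear map
between Euclidean spaces. -/
noncomputable def specNorm {m n : Type*} [Fintype m] [Fintype n] [DecidableEq n]
    (X : Matrix m n ℝ) : ℝ :=
  ‖LinearMap.toContinuousLinearMap (Matrix.toEuclideanLin X)‖

/-- The `i`-th largest singular value (1-indexed) of a real matrix, via the
Eckart–Young characterization `σ_i(X) = inf {‖X − L‖ : rank L ≤ i − 1}`. -/
noncomputable def singularValue {m n : Type*} [Fintype m] [Fintype n] [DecidableEq n]
    (X : Matrix m n ℝ) (i : ℕ) : ℝ :=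
  sInf { r : ℝ | ∃ L : Matrix m n ℝ, L.rank ≤ i - 1 ∧ r = specNorm (X - L) }


set_option linter.unusedSectionVars false
set_option maxHeartbeats 1000000
open scoped Matrix.Norms.L2Operator
open Matrix

section Helpers


variable {a b c d : Type*} [Fintype a] [Fintype b] [Fintype c] [Fintype d]
  [DecidableEq a] [DecidableEq b] [DecidableEq c] [DecidableEq d]

lemma specNorm_eq_norm (X : Matrix a c ℝ) : specNorm X = ‖X‖ := rfl

lemma toEuc_coord (M : Matrix a c ℝ) (v : EuclideanSpace ℝ c) (i : a) :
    Matrix.toEuclideanLin M v i = ∑ j, M i j * v j := by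
  simp [Matrix.toEuclideanLin_apply, Matrix.mulVec, dotProduct]

lemma l2_norm_apply (M : Matrix a c ℝ) (v : EuclideanSpace ℝ c) :
    ‖Matrix.toEuclideanLin M v‖ ≤ ‖M‖ * ‖v‖ :=
  ((Matrix.toEuclideanLin.trans LinearMap.toContinuousLinearMap) M).le_opNorm v

lemma norm_toBlocks₁₂_le (X : Matrix (a ⊕ b) (c ⊕ d) ℝ) :
    ‖X.submatrix Sum.inl Sum.inr‖ ≤ ‖X‖ := by
  rw [Matrix.l2_opNorm_def]
  apply ContinuousLinearMap.opNorm_le_bound _ (norm_nonneg _)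
  intro y
  set x : EuclideanSpace ℝ (c ⊕ d) :=
    (WithLp.equiv 2 _).symm (Sum.elim (fun _ => (0:ℝ)) (fun j => y j)) with hx
  have hxc : ∀ j : c ⊕ d, x j = Sum.elim (fun _ => (0:ℝ)) (fun j => y j) j := fun _ => rfl
  have hxnorm : ‖x‖ = ‖y‖ := by
    rw [EuclideanSpace.norm_eq, EuclideanSpace.norm_eq]
    congr 1
    rw [Fintype.sum_sum_type]
    simp [hxc]
  have key : ∀ i : a, Matrix.toEuclideanLin (X.submatrix Sum.inl Sum.inr) y i
      = Matrix.toEuclideanLin X x (Sum.inl i) := by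
    intro i
    rw [toEuc_coord, toEuc_coord, Fintype.sum_sum_type]
    simp [hxc]
  calc ‖(Matrix.toEuclideanLin.trans LinearMap.toContinuousLinearMap)
        (X.submatrix Sum.inl Sum.inr) y‖
      = Real.sqrt (∑ i, ‖Matrix.toEuclideanLin (X.submatrix Sum.inl Sum.inr) y i‖ ^ 2) :=
        EuclideanSpace.norm_eq _
    _ ≤ Real.sqrt (∑ i, ‖Matrix.toEuclideanLin X x i‖ ^ 2) := by
        apply Real.sqrt_le_sqrt
        rw [Fintype.sum_sum_type]
        simp only [key]
        have : (0:ℝ) ≤ ∑ i : b, ‖Matrix.toEuclideanLin X x (Sum.inr i)‖ ^ 2 :=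
          Finset.sum_nonneg fun _ _ => by positivity
        linarith
    _ = ‖Matrix.toEuclideanLin X x‖ := (EuclideanSpace.norm_eq _).symm
    _ ≤ ‖X‖ * ‖x‖ := l2_norm_apply X x
    _ = ‖X‖ * ‖y‖ := by rw [hxnorm]

lemma norm_fromBlocks_B_le (B : Matrix a d ℝ) :
    ‖(Matrix.fromBlocks (0 : Matrix a c ℝ) B 0 (0 : Matrix b d ℝ))‖ ≤ ‖B‖ := by
  rw [Matrix.l2_opNorm_def]
  apply ContinuousLinearMap.opNorm_le_bound _ (norm_nonneg _)
  intro x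
  set y : EuclideanSpace ℝ d := (WithLp.equiv 2 _).symm (fun j => x (Sum.inr j)) with hy
  have hyc : ∀ j : d, y j = x (Sum.inr j) := fun _ => rfl
  have hynorm : ‖y‖ ≤ ‖x‖ := by
    rw [EuclideanSpace.norm_eq, EuclideanSpace.norm_eq]
    apply Real.sqrt_le_sqrt
    rw [Fintype.sum_sum_type]
    have : (0:ℝ) ≤ ∑ i : c, ‖x (Sum.inl i)‖ ^ 2 := Finset.sum_nonneg fun _ _ => by positivity
    simp only [hyc]
    linarith
  have key1 : ∀ i : a,
      Matrix.toEuclideanLin (Matrix.fromBlocks (0 : Matrix a c ℝ) B 0 (0 : Matrix b d ℝ)) x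
        (Sum.inl i) = Matrix.toEuclideanLin B y i := by
    intro i
    rw [toEuc_coord, toEuc_coord, Fintype.sum_sum_type]
    simp [hyc]
  have key2 : ∀ i : b,
      Matrix.toEuclideanLin (Matrix.fromBlocks (0 : Matrix a c ℝ) B 0 (0 : Matrix b d ℝ)) x
        (Sum.inr i) = 0 := by
    intro i
    rw [toEuc_coord, Fintype.sum_sum_type]
    simp
  calc ‖(Matrix.toEuclideanLin.trans LinearMap.toContinuousLinearMap)
        (Matrix.fromBlocks (0 : Matrix a c ℝ) B 0 (0 : Matrix b d ℝ)) x‖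
      = Real.sqrt (∑ i, ‖Matrix.toEuclideanLin
          (Matrix.fromBlocks (0 : Matrix a c ℝ) B 0 (0 : Matrix b d ℝ)) x i‖ ^ 2) :=
        EuclideanSpace.norm_eq _
    _ = Real.sqrt (∑ i, ‖Matrix.toEuclideanLin B y i‖ ^ 2) := by
        rw [Fintype.sum_sum_type]
        simp [key1, key2]
    _ = ‖Matrix.toEuclideanLin B y‖ := (EuclideanSpace.norm_eq _).symm
    _ ≤ ‖B‖ * ‖y‖ := l2_norm_apply B y
    _ ≤ ‖B‖ * ‖x‖ := mul_le_mul_of_nonneg_left hynorm (norm_nonneg _)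

end Helpers

/-- If `K₀ = [[A, 0], [G, D]]` is invertible and `‖B‖ ⬝ ‖K₀⁻¹‖ < 1`, then
`K = [[A, B], [G, D]]` is invertible and the `(p+1)`-st singular value of the upper-right
block `C` of `K⁻¹` satisfies `σ_{p+1}(C) ≤ ‖K₀⁻¹‖² ‖B‖ / (1 − ‖K₀⁻¹‖ ‖B‖)`. -/
theorem singularValue_perturbation_bound (M n p : ℕ) (hn : 0 < n) (hp : 0 < p)
    (hM : n + p < M)
    (A : Matrix (Fin n) (Fin (n + p)) ℝ) (G : Matrix (Fin (M - n)) (Fin (n + p)) ℝ)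
    (D : Matrix (Fin (M - n)) (Fin (M - n - p)) ℝ)
    (E₀ : Matrix (Fin (n + p)) (Fin n) ℝ) (C₀ : Matrix (Fin (n + p)) (Fin (M - n)) ℝ)
    (H₀ : Matrix (Fin (M - n - p)) (Fin n) ℝ) (F₀ : Matrix (Fin (M - n - p)) (Fin (M - n)) ℝ)
    (hinv₀ : Matrix.fromBlocks A 0 G D * Matrix.fromBlocks E₀ C₀ H₀ F₀ = 1)
    (hinv₀' : Matrix.fromBlocks E₀ C₀ H₀ F₀ * Matrix.fromBlocks A 0 G D = 1)
    (B : Matrix (Fin n) (Fin (M - n - p)) ℝ)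
    (hB : specNorm B * specNorm (Matrix.fromBlocks E₀ C₀ H₀ F₀) < 1) :
    (∃ S : Matrix (Fin (n + p) ⊕ Fin (M - n - p)) (Fin n ⊕ Fin (M - n)) ℝ,
        Matrix.fromBlocks A B G D * S = 1 ∧ S * Matrix.fromBlocks A B G D = 1) ∧
      ∀ (E : Matrix (Fin (n + p)) (Fin n) ℝ) (C : Matrix (Fin (n + p)) (Fin (M - n)) ℝ)
        (H : Matrix (Fin (M - n - p)) (Fin n) ℝ) (F : Matrix (Fin (M - n - p)) (Fin (M - n)) ℝ),
        Matrix.fromBlocks A B G D * Matrix.fromBlocks E C H F = 1 →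
        Matrix.fromBlocks E C H F * Matrix.fromBlocks A B G D = 1 →
        singularValue C (p + 1) ≤
          specNorm (Matrix.fromBlocks E₀ C₀ H₀ F₀) ^ 2 * specNorm B /
            (1 - specNorm (Matrix.fromBlocks E₀ C₀ H₀ F₀) * specNorm B) := by
  classical
  set Q : Matrix (Fin (n + p) ⊕ Fin (M - n - p)) (Fin n ⊕ Fin (M - n)) ℝ :=
    Matrix.fromBlocks E₀ C₀ H₀ F₀ with hQdef
  set K₀ : Matrix (Fin n ⊕ Fin (M - n)) (Fin (n + p) ⊕ Fin (M - n - p)) ℝ :=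
    Matrix.fromBlocks A 0 G D with hK₀def
  set K : Matrix (Fin n ⊕ Fin (M - n)) (Fin (n + p) ⊕ Fin (M - n - p)) ℝ :=
    Matrix.fromBlocks A B G D with hKdef
  set P : Matrix (Fin n ⊕ Fin (M - n)) (Fin (n + p) ⊕ Fin (M - n - p)) ℝ :=
    Matrix.fromBlocks 0 B 0 0 with hPdef
  have hKP : K = K₀ + P := by
    rw [hKdef, hK₀def, hPdef, Matrix.fromBlocks_add]
    simp
  have hPnorm : ‖P‖ ≤ ‖B‖ := norm_fromBlocks_B_le B
  have hbq : ‖B‖ * ‖Q‖ < 1 := hB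
  have hq0 : (0:ℝ) ≤ ‖Q‖ := norm_nonneg _
  have hb0 : (0:ℝ) ≤ ‖B‖ := norm_nonneg _
  constructor
  · -- existence of the inverse
    haveI : CompleteSpace
        (Matrix (Fin (n + p) ⊕ Fin (M - n - p)) (Fin (n + p) ⊕ Fin (M - n - p)) ℝ) :=
      FiniteDimensional.complete ℝ _
    have hQP : ‖-(Q * P)‖ < 1 := by
      rw [norm_neg]
      calc ‖Q * P‖ ≤ ‖Q‖ * ‖P‖ := Matrix.l2_opNorm_mul Q P
        _ ≤ ‖Q‖ * ‖B‖ := mul_le_mul_of_nonneg_left hPnorm hq0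
        _ < 1 := by linarith [hbq, mul_comm ‖Q‖ ‖B‖]
    set u : (Matrix (Fin (n + p) ⊕ Fin (M - n - p)) (Fin (n + p) ⊕ Fin (M - n - p)) ℝ)ˣ :=
      Units.oneSub (-(Q * P)) hQP with hudef
    have huval : (u : Matrix _ _ ℝ) = 1 + Q * P := by
      rw [hudef]; exact sub_neg_eq_add 1 (Q * P)
    have hKfact : K = K₀ * (u : Matrix (Fin (n + p) ⊕ Fin (M - n - p)) (Fin (n + p) ⊕ Fin (M - n - p)) ℝ) := by
      rw [huval, Matrix.mul_add, Matrix.mul_one, ← Matrix.mul_assoc, hinv₀, Matrix.one_mul, hKP]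
    have hui := u.mul_inv
    have hiu := u.inv_mul
    refine ⟨(u⁻¹).val * Q, ?_, ?_⟩
    · rw [hKfact, Matrix.mul_assoc, ← Matrix.mul_assoc _ _ Q, hui, Matrix.one_mul, hinv₀]
    · have hq : Q * (K₀ * u.val) = u.val := by
        rw [← Matrix.mul_assoc, hinv₀', Matrix.one_mul]
      rw [hKfact, Matrix.mul_assoc, hq, hiu]
  · -- the singular value bound
    intro E C H F hK1 hK2
    set X : Matrix (Fin (n + p) ⊕ Fin (M - n - p)) (Fin n ⊕ Fin (M - n)) ℝ :=
      Matrix.fromBlocks E C H F with hXdef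
    -- block identities from hinv₀
    have hmul := hinv₀
    rw [Matrix.fromBlocks_multiply, ← Matrix.fromBlocks_one] at hmul
    have h11 := congrArg Matrix.toBlocks₁₁ hmul
    have h12 := congrArg Matrix.toBlocks₁₂ hmul
    simp only [Matrix.toBlocks_fromBlocks₁₁, Matrix.toBlocks_fromBlocks₁₂,
      Matrix.zero_mul, Matrix.mul_zero, add_zero, Matrix.zero_mul] at h11 h12
    -- h11 : A * E₀ = 1, h12 : A * C₀ = 0
    have hrankA : A.rank = n := by
      refine le_antisymm (le_trans A.rank_le_card_height (by simp)) ?_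
      calc n = (1 : Matrix (Fin n) (Fin n) ℝ).rank := by simp [Matrix.rank_one]
        _ = (A * E₀).rank := by rw [h11]
        _ ≤ A.rank := Matrix.rank_mul_le_left A E₀
    have hrankC₀ : C₀.rank ≤ p := by
      have hcomp : ∀ v, A.mulVecLin (C₀.mulVecLin v) = 0 := by
        intro v
        have : (A * C₀).mulVecLin v = 0 := by rw [h12]; simp
        rwa [Matrix.mulVecLin_mul, LinearMap.comp_apply] at this
      have hle : LinearMap.range C₀.mulVecLin ≤ LinearMap.ker A.mulVecLin := by
        rintro _ ⟨v, rfl⟩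
        exact hcomp v
      have hrn := LinearMap.finrank_range_add_finrank_ker A.mulVecLin
      have hfr : Module.finrank ℝ (Fin (n + p) → ℝ) = n + p := by simp
      have hrange : Module.finrank ℝ (LinearMap.range A.mulVecLin) = n := hrankA
      have hker : Module.finrank ℝ (LinearMap.ker A.mulVecLin) = p := by
        rw [hfr, hrange] at hrn; omega
      calc C₀.rank ≤ Module.finrank ℝ (LinearMap.ker A.mulVecLin) :=
            Submodule.finrank_mono hle
        _ = p := hker
    -- norm bound on X - Q
    have h1 : X * K₀ * Q = X := by rw [Matrix.mul_assoc, hinv₀, Matrix.mul_one]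
    have h2 : X * K * Q = Q := by rw [hK2, Matrix.one_mul]
    have hXQ : X - Q = X * (K₀ - K) * Q := by
      rw [Matrix.mul_sub, Matrix.sub_mul, h1, h2]
    have hK₀K : K₀ - K = -P := by rw [hKP]; abel
    have hnorm1 : ‖X - Q‖ ≤ ‖X‖ * ‖B‖ * ‖Q‖ := by
      rw [hXQ, hK₀K]
      calc ‖X * -P * Q‖ ≤ ‖X * -P‖ * ‖Q‖ := Matrix.l2_opNorm_mul _ _
        _ ≤ ‖X‖ * ‖-P‖ * ‖Q‖ :=
            mul_le_mul_of_nonneg_right (Matrix.l2_opNorm_mul _ _) hq0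
        _ ≤ ‖X‖ * ‖B‖ * ‖Q‖ := by
            have : ‖-P‖ ≤ ‖B‖ := by rw [norm_neg]; exact hPnorm
            have hx0 : (0:ℝ) ≤ ‖X‖ := norm_nonneg _
            exact mul_le_mul_of_nonneg_right (mul_le_mul_of_nonneg_left this hx0) hq0
    have hXle : ‖X‖ ≤ ‖Q‖ + ‖X - Q‖ := by
      have := norm_sub_norm_le X Q
      linarith
    have hpos : 0 < 1 - ‖Q‖ * ‖B‖ := by nlinarith [mul_comm ‖Q‖ ‖B‖]
    have hfinal : ‖X - Q‖ ≤ ‖Q‖ ^ 2 * ‖B‖ / (1 - ‖Q‖ * ‖B‖) := by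
      rw [le_div_iff₀ hpos]
      nlinarith [hnorm1, mul_le_mul_of_nonneg_right hXle (mul_nonneg hb0 hq0)]
    -- conclude via the sInf
    have hCC₀ : C - C₀ = (X - Q).submatrix Sum.inl Sum.inr := by
      ext i j
      simp [hXdef, hQdef, Matrix.sub_apply, Matrix.submatrix_apply, Matrix.fromBlocks]
    have hnormC : ‖C - C₀‖ ≤ ‖X - Q‖ := by
      rw [hCC₀]; exact norm_toBlocks₁₂_le _
    have hbdd : BddBelow { r : ℝ | ∃ L : Matrix (Fin (n + p)) (Fin (M - n)) ℝ,
        L.rank ≤ (p + 1) - 1 ∧ r = specNorm (C - L) } := by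
      refine ⟨0, ?_⟩
      rintro r ⟨L, _, rfl⟩
      exact norm_nonneg _
    have hmem : specNorm (C - C₀) ∈ { r : ℝ | ∃ L : Matrix (Fin (n + p)) (Fin (M - n)) ℝ,
        L.rank ≤ (p + 1) - 1 ∧ r = specNorm (C - L) } := ⟨C₀, by simpa using hrankC₀, rfl⟩
    calc singularValue C (p + 1) ≤ specNorm (C - C₀) := csInf_le hbdd hmem
      _ = ‖C - C₀‖ := rfl
      _ ≤ ‖X - Q‖ := hnormC
      _ ≤ ‖Q‖ ^ 2 * ‖B‖ / (1 - ‖Q‖ * ‖B‖) := hfinal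
end

section
/- Let M, n, p be positive integers with n + p < M. Let K be an invertible M×M real matrix written in block form K = [[A, B], [G, D]] with A of size n×(n+p), and write K⁻¹ = [[E, C], [H, F]] with C of size (n+p)×(M−n). Suppose σ_p(C) > 0, and let L be a best rank-p approximation of C obtained by truncating a singular value decomposition of C after the first p singular values (so that ‖C − L‖ = σ_{p+1}(C)). Suppose σ_{p+1}(C) < 1/‖K‖, so that J = [[E, L], [H, F]] is invertible with J⁻¹ = [[Ã, 0], [G̃, D̃]] partitioned conformally with K (Ã the same size as A, D̃ the same size as D, G̃ the same size as G). Then ‖B‖ ≥ σ_n(A)·σ_{p+1}(C)·σ_{M−n−p}(D̃) / (1 + σ_{p+1}(C)·‖G̃L‖/σ_p(C)). -/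
/-- `L` is a best rank-`p` approximation of `C` obtained by truncating a singular value
decomposition `C = Q S Pᵀ` of `C` after the first `p` singular values. -/
def IsSVDTruncation {a b : ℕ} (C L : Matrix (Fin a) (Fin b) ℝ) (p : ℕ) : Prop :=
  ∃ (Q : Matrix (Fin a) (Fin a) ℝ) (P : Matrix (Fin b) (Fin b) ℝ)
    (S : Matrix (Fin a) (Fin b) ℝ),
    Q.transpose * Q = 1 ∧ P.transpose * P = 1 ∧
    (∀ (i : Fin a) (j : Fin b), (i : ℕ) ≠ (j : ℕ) → S i j = 0) ∧
    (∀ (i : Fin a) (j : Fin b), (i : ℕ) = (j : ℕ) → S i j = singularValue C ((i : ℕ) + 1)) ∧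
    C = Q * S * P.transpose ∧
    L = Q * Matrix.of (fun (i : Fin a) (j : Fin b) => if (i : ℕ) < p then S i j else 0)
          * P.transpose

set_option linter.unusedSectionVars false
set_option maxHeartbeats 2000000

namespace SpecAux

open Matrix

variable {k l o : Type*} [Fintype k] [Fintype l] [Fintype o]
  [DecidableEq k] [DecidableEq l] [DecidableEq o]

noncomputable def eu {k : Type*} (v : k → ℝ) : EuclideanSpace ℝ k := (WithLp.equiv 2 _).symm v

lemma specNorm_nonneg (X : Matrix k l ℝ) : 0 ≤ specNorm X := norm_nonneg _

lemma toEu_apply (X : Matrix k l ℝ) (v : l → ℝ) :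
    (LinearMap.toContinuousLinearMap (Matrix.toEuclideanLin X)) (eu v) = eu (X *ᵥ v) := by
  simp [eu, Matrix.toEuclideanLin_apply_piLp_toLp]

lemma norm_mulVec_le (X : Matrix k l ℝ) (v : l → ℝ) :
    ‖eu (X *ᵥ v)‖ ≤ specNorm X * ‖eu v‖ := by
  rw [← toEu_apply]
  exact (LinearMap.toContinuousLinearMap (Matrix.toEuclideanLin X)).le_opNorm _

lemma specNorm_le_bound (X : Matrix k l ℝ) (c : ℝ) (hc : 0 ≤ c)
    (h : ∀ v : l → ℝ, ‖eu (X *ᵥ v)‖ ≤ c * ‖eu v‖) : specNorm X ≤ c := by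
  apply ContinuousLinearMap.opNorm_le_bound _ hc
  intro v
  have := h (WithLp.equiv 2 _ v)
  simpa [eu, Matrix.toEuclideanLin_apply] using this

lemma eu_norm_sq (v : k → ℝ) : ‖eu v‖ ^ 2 = v ⬝ᵥ v := by
  rw [EuclideanSpace.real_norm_sq_eq]
  simp [eu, dotProduct, sq]

lemma eu_norm_eq (v : k → ℝ) (w : l → ℝ) (h : v ⬝ᵥ v = w ⬝ᵥ w) : ‖eu v‖ = ‖eu w‖ := by
  have h1 := eu_norm_sq v; have h2 := eu_norm_sq w
  nlinarith [norm_nonneg (eu v), norm_nonneg (eu w)]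

lemma eu_norm_le (v : k → ℝ) (w : l → ℝ) (h : v ⬝ᵥ v ≤ w ⬝ᵥ w) : ‖eu v‖ ≤ ‖eu w‖ := by
  have h1 := eu_norm_sq v; have h2 := eu_norm_sq w
  nlinarith [norm_nonneg (eu v), norm_nonneg (eu w)]

lemma eu_norm_one_of (v : k → ℝ) (h : v ⬝ᵥ v = 1) : ‖eu v‖ = 1 := by
  have h1 := eu_norm_sq v
  nlinarith [norm_nonneg (eu v)]

lemma specNorm_mul_le (X : Matrix k l ℝ) (Y : Matrix l o ℝ) :
    specNorm (X * Y) ≤ specNorm X * specNorm Y := by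
  apply specNorm_le_bound _ _ (mul_nonneg (specNorm_nonneg X) (specNorm_nonneg Y))
  intro v
  rw [← Matrix.mulVec_mulVec]
  calc ‖eu (X *ᵥ (Y *ᵥ v))‖ ≤ specNorm X * ‖eu (Y *ᵥ v)‖ := norm_mulVec_le _ _
  _ ≤ specNorm X * (specNorm Y * ‖eu v‖) := by
      exact mul_le_mul_of_nonneg_left (norm_mulVec_le _ _) (specNorm_nonneg X)
  _ = specNorm X * specNorm Y * ‖eu v‖ := by ring

lemma specNorm_neg (X : Matrix k l ℝ) : specNorm (-X) = specNorm X := by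
  unfold specNorm; rw [map_neg, map_neg, norm_neg]

lemma specNorm_add_le (X Y : Matrix k l ℝ) :
    specNorm (X + Y) ≤ specNorm X + specNorm Y := by
  unfold specNorm; rw [map_add, map_add]; exact norm_add_le _ _

lemma norm_mulVec_orth (P : Matrix k k ℝ) (hP : Pᵀ * P = 1) (v : k → ℝ) :
    ‖eu (P *ᵥ v)‖ = ‖eu v‖ := by
  apply eu_norm_eq
  rw [Matrix.dotProduct_mulVec, ← Matrix.mulVec_transpose, Matrix.mulVec_mulVec, hP,
    Matrix.one_mulVec]

lemma vecMulVec_mulVec (u : k → ℝ) (v : l → ℝ) (w : l → ℝ) :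
    vecMulVec u v *ᵥ w = (v ⬝ᵥ w) • u := by
  ext i
  simp only [Matrix.mulVec, vecMulVec_apply, dotProduct, Pi.smul_apply, smul_eq_mul,
    Finset.sum_mul]
  exact Finset.sum_congr rfl (by intros; ring)

lemma specNorm_vecMulVec_le (u : k → ℝ) (v : l → ℝ) :
    specNorm (vecMulVec u v) ≤ ‖eu u‖ * ‖eu v‖ := by
  apply specNorm_le_bound _ _ (by positivity)
  intro w
  rw [vecMulVec_mulVec]
  have h2 : eu ((v ⬝ᵥ w) • u) = (v ⬝ᵥ w) • eu u := rfl
  rw [h2, norm_smul]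
  have h3 : |v ⬝ᵥ w| ≤ ‖eu v‖ * ‖eu w‖ := by
    have ha := abs_real_inner_le_norm (eu v) (eu w)
    have heq : (inner ℝ (eu v) (eu w) : ℝ) = v ⬝ᵥ w := by
      simp [eu, PiLp.inner_apply, dotProduct, RCLike.inner_apply, mul_comm]
    rwa [heq] at ha
  calc |v ⬝ᵥ w| * ‖eu u‖ ≤ (‖eu v‖ * ‖eu w‖) * ‖eu u‖ := by
        exact mul_le_mul_of_nonneg_right h3 (norm_nonneg _)
  _ = ‖eu u‖ * ‖eu v‖ * ‖eu w‖ := by ring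

lemma singularValue_nonneg (X : Matrix k l ℝ) (i : ℕ) : 0 ≤ singularValue X i := by
  apply Real.sInf_nonneg
  rintro r ⟨L, -, rfl⟩
  exact specNorm_nonneg _

lemma singularValue_le (X : Matrix k l ℝ) (i : ℕ) (L : Matrix k l ℝ) (hL : L.rank ≤ i - 1) :
    singularValue X i ≤ specNorm (X - L) := by
  apply csInf_le
  · exact ⟨0, by rintro r ⟨L', -, rfl⟩; exact specNorm_nonneg _⟩
  · exact ⟨L, hL, rfl⟩

lemma singularValue_antitone (X : Matrix k l ℝ) {i j : ℕ} (h : i ≤ j) :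
    singularValue X j ≤ singularValue X i := by
  apply csInf_le_csInf
  · exact ⟨0, by rintro r ⟨L', -, rfl⟩; exact specNorm_nonneg _⟩
  · exact ⟨specNorm (X - 0), ⟨0, by simp, rfl⟩⟩
  · rintro r ⟨L', hr, rfl⟩
    exact ⟨L', hr.trans (by omega), rfl⟩

lemma mul_vecMulVec (X : Matrix k l ℝ) (u : l → ℝ) (v : o → ℝ) :
    X * vecMulVec u v = vecMulVec (X *ᵥ u) v := by
  ext i j
  simp only [Matrix.mul_apply, vecMulVec_apply, Matrix.mulVec, dotProduct, Finset.sum_mul]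
  exact Finset.sum_congr rfl (by intros; ring)

lemma rank_le_of_mulVec_eq_zero (Y : Matrix l l ℝ) (v : l → ℝ) (hv : v ≠ 0)
    (h : Y *ᵥ v = 0) : Y.rank ≤ Fintype.card l - 1 := by
  have hv' : v ∈ LinearMap.ker Y.mulVecLin := by simpa using h
  have hker : 0 < Module.finrank ℝ (LinearMap.ker Y.mulVecLin) := by
    rw [Module.finrank_pos_iff]
    exact nontrivial_of_ne ⟨v, hv'⟩ 0 (by simp [Subtype.ext_iff, hv])
  have := LinearMap.finrank_range_add_finrank_ker Y.mulVecLin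
  have hcard : Module.finrank ℝ (l → ℝ) = Fintype.card l := by
    simp [Module.finrank_pi]
  rw [hcard] at this
  have hrank : Y.rank = Module.finrank ℝ (LinearMap.range Y.mulVecLin) := rfl
  omega

lemma card_val_gt (a t : ℕ) : Fintype.card {i : Fin a // t < (i : ℕ)} = a - (t + 1) := by
  rw [Fintype.card_subtype]
  have himg : (Finset.univ.filter fun i : Fin a => t < (i : ℕ)).image Fin.val
      = Finset.Ioo t a := by
    ext x
    simp only [Finset.mem_image, Finset.mem_filter, Finset.mem_univ, true_and, Finset.mem_Ioo]
    constructor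
    · rintro ⟨i, hi, rfl⟩; exact ⟨hi, i.isLt⟩
    · rintro ⟨h1, h2⟩; exact ⟨⟨x, h2⟩, h1, rfl⟩
  have hinj := Finset.card_image_of_injective
    (Finset.univ.filter fun i : Fin a => t < (i : ℕ)) Fin.val_injective
  rw [himg] at hinj
  rw [← hinj, Nat.card_Ioo]
  omega

/-- the smallest-singular-value bound `σ_min(X) ‖v‖ ≤ ‖X v‖`. -/
lemma sv_card_mulVec (X : Matrix k l ℝ) (v : l → ℝ) :
    singularValue X (Fintype.card l) * ‖eu v‖ ≤ ‖eu (X *ᵥ v)‖ := by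
  rcases eq_or_ne v 0 with rfl | hv
  · simp only [Matrix.mulVec_zero]
    have h0 : ‖eu (0 : l → ℝ)‖ = 0 := by
      have h1 := eu_norm_sq (0 : l → ℝ)
      have h2 : (0 : l → ℝ) ⬝ᵥ 0 = 0 := by simp
      nlinarith [norm_nonneg (eu (0 : l → ℝ))]
    rw [h0, mul_zero]
    exact norm_nonneg _
  · have hvv : (0:ℝ) < v ⬝ᵥ v := by
      have h1 := eu_norm_sq v
      have h2 : eu v ≠ 0 := by simpa [eu] using hv
      have h3 : 0 < ‖eu v‖ := norm_pos_iff.mpr h2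
      nlinarith
    set t : ℝ := (v ⬝ᵥ v)⁻¹ with ht
    have htpos : 0 < t := inv_pos.mpr hvv
    set Wm : Matrix l l ℝ := (1 : Matrix l l ℝ) - vecMulVec (t • v) v with hWm
    have hrank : (X * Wm).rank ≤ Fintype.card l - 1 := by
      refine le_trans (Matrix.rank_mul_le_right _ _) ?_
      apply rank_le_of_mulVec_eq_zero _ v hv
      rw [hWm, Matrix.sub_mulVec, vecMulVec_mulVec, Matrix.one_mulVec]
      ext i
      simp only [Pi.sub_apply, Pi.smul_apply, smul_eq_mul, Pi.zero_apply]
      have hvt : (v ⬝ᵥ v) * t = 1 := by rw [ht]; exact mul_inv_cancel₀ (ne_of_gt hvv)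
      linear_combination (-(v i)) * hvt
    have hle := singularValue_le X (Fintype.card l) (X * Wm) hrank
    have hXW : X - X * Wm = vecMulVec (t • (X *ᵥ v)) v := by
      rw [hWm, Matrix.mul_sub, Matrix.mul_one, sub_sub_cancel, mul_vecMulVec, Matrix.mulVec_smul]
    rw [hXW] at hle
    have hnorm : specNorm (vecMulVec (t • (X *ᵥ v)) v) ≤ t * ‖eu (X *ᵥ v)‖ * ‖eu v‖ := by
      refine le_trans (specNorm_vecMulVec_le _ _) ?_
      have : eu (t • (X *ᵥ v)) = t • eu (X *ᵥ v) := rfl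
      rw [this, norm_smul, Real.norm_eq_abs, abs_of_pos htpos, mul_assoc]
    have hfin : singularValue X (Fintype.card l) ≤ t * ‖eu (X *ᵥ v)‖ * ‖eu v‖ :=
      le_trans hle hnorm
    have hv2 : ‖eu v‖ ^ 2 = v ⬝ᵥ v := eu_norm_sq v
    have hvpos : 0 < ‖eu v‖ := by nlinarith [norm_nonneg (eu v)]
    have : t * ‖eu v‖ ^ 2 = 1 := by rw [hv2, ht]; exact inv_mul_cancel₀ (ne_of_gt hvv)
    nlinarith [singularValue_nonneg X (Fintype.card l), norm_nonneg (eu (X *ᵥ v))]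


lemma sum_dite_le {m1 m2 : ℕ} (f : Fin m2 → ℝ) (hf : ∀ j, 0 ≤ f j) :
    (∑ i : Fin m1, if h : (i : ℕ) < m2 then f ⟨i, h⟩ else 0) ≤ ∑ j : Fin m2, f j := by
  set F : ℕ → ℝ := fun i => if h : i < m2 then f ⟨i, h⟩ else 0 with hF
  have hFnn : ∀ i, 0 ≤ F i := by
    intro i; rw [hF]; dsimp only
    split
    · exact hf _
    · exact le_refl 0
  have h1 : (∑ i : Fin m1, if h : (i : ℕ) < m2 then f ⟨i, h⟩ else 0)
      = ∑ i ∈ Finset.range m1, F i := Fin.sum_univ_eq_sum_range F m1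
  have h2 : (∑ j : Fin m2, f j) = ∑ i ∈ Finset.range m2, F i := by
    rw [← Fin.sum_univ_eq_sum_range F m2]
    apply Finset.sum_congr rfl
    intro j _
    rw [hF]; simp [j.isLt]
  rw [h1, h2]
  calc ∑ i ∈ Finset.range m1, F i ≤ ∑ i ∈ Finset.range (m1 + m2), F i :=
        Finset.sum_le_sum_of_subset_of_nonneg (Finset.range_subset_range.mpr (by omega))
          (fun i _ _ => hFnn i)
  _ = ∑ i ∈ Finset.range m2, F i := by
      refine (Finset.sum_subset (Finset.range_subset_range.mpr (by omega)) ?_).symm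
      intro x _ hx2
      have hxm : ¬ x < m2 := by simpa using hx2
      rw [hF]; exact dif_neg hxm

lemma spl_mulVec_le {bb aa : ℕ} (c : ℕ → ℝ) (p : ℕ) (c0 : ℝ) (hc0 : 0 < c0)
    (hc : ∀ i : ℕ, i < p → c0 ≤ c (i + 1)) (hpa : p ≤ aa) (w : Fin aa → ℝ) :
    ‖eu ((Matrix.of fun (i : Fin bb) (j : Fin aa) =>
        if (i : ℕ) = (j : ℕ) ∧ (i : ℕ) < p then (c ((i : ℕ) + 1))⁻¹ else 0) *ᵥ w)‖
      ≤ c0⁻¹ * ‖eu w‖ := by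
  set Spl : Matrix (Fin bb) (Fin aa) ℝ := Matrix.of fun (i : Fin bb) (j : Fin aa) =>
      if (i : ℕ) = (j : ℕ) ∧ (i : ℕ) < p then (c ((i : ℕ) + 1))⁻¹ else 0 with hSpl
  have hrhs : c0⁻¹ * ‖eu w‖ = ‖eu (c0⁻¹ • w)‖ := by
    have : eu (c0⁻¹ • w) = c0⁻¹ • eu w := rfl
    rw [this, norm_smul, Real.norm_eq_abs, abs_of_pos (inv_pos.mpr hc0)]
  rw [hrhs]
  apply eu_norm_le
  have hentry : ∀ i : Fin bb, (Spl *ᵥ w) i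
      = if h : (i : ℕ) < p then (c ((i : ℕ) + 1))⁻¹ * w ⟨(i : ℕ), lt_of_lt_of_le h hpa⟩
        else 0 := by
    intro i
    by_cases h : (i : ℕ) < p
    · rw [dif_pos h]
      have hib : (i : ℕ) < aa := lt_of_lt_of_le h hpa
      rw [show (Spl *ᵥ w) i = ∑ j : Fin aa, Spl i j * w j from rfl]
      rw [Finset.sum_eq_single (⟨(i : ℕ), hib⟩ : Fin aa)]
      · rw [hSpl]
        simp [h]
      · intro j _ hj
        rw [hSpl]
        simp only [Matrix.of_apply]
        rw [if_neg, zero_mul]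
        rintro ⟨hij, -⟩
        exact hj (by apply Fin.ext; simp [← hij])
      · intro hmem; exact absurd (Finset.mem_univ _) hmem
    · rw [dif_neg h]
      rw [show (Spl *ᵥ w) i = ∑ j : Fin aa, Spl i j * w j from rfl]
      apply Finset.sum_eq_zero
      intro j _
      rw [hSpl]
      simp only [Matrix.of_apply]
      rw [if_neg, zero_mul]
      rintro ⟨-, hip⟩; exact h hip
  calc (Spl *ᵥ w) ⬝ᵥ (Spl *ᵥ w) = ∑ i : Fin bb, (Spl *ᵥ w) i * (Spl *ᵥ w) i := rfl
  _ ≤ ∑ i : Fin bb, (if h : (i : ℕ) < aa then (c0⁻¹ * w ⟨(i : ℕ), h⟩) ^ 2 else 0) := by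
      apply Finset.sum_le_sum
      intro i _
      rw [hentry i]
      by_cases h : (i : ℕ) < p
      · rw [dif_pos h, dif_pos (lt_of_lt_of_le h hpa)]
        have h1 : 0 < c ((i : ℕ) + 1) := lt_of_lt_of_le hc0 (hc _ h)
        have h2 : (c ((i : ℕ) + 1))⁻¹ ≤ c0⁻¹ := by
          apply inv_anti₀ hc0 (hc _ h)
        have h3 : (0:ℝ) ≤ (c ((i : ℕ) + 1))⁻¹ := le_of_lt (inv_pos.mpr h1)
        have h5 : (c ((i : ℕ) + 1))⁻¹ * (c ((i : ℕ) + 1))⁻¹ ≤ c0⁻¹ * c0⁻¹ :=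
          mul_le_mul h2 h2 h3 (le_of_lt (inv_pos.mpr hc0))
        nlinarith [sq_nonneg (w ⟨(i : ℕ), lt_of_lt_of_le h hpa⟩), h5]
      · rw [dif_neg h, zero_mul]
        split
        · positivity
        · exact le_refl 0
  _ ≤ ∑ j : Fin aa, (c0⁻¹ * w j) ^ 2 := by
      exact sum_dite_le (fun j => (c0⁻¹ * w j) ^ 2) (fun j => sq_nonneg _)
  _ = (c0⁻¹ • w) ⬝ᵥ (c0⁻¹ • w) := by
      simp only [dotProduct, Pi.smul_apply, smul_eq_mul]
      exact Finset.sum_congr rfl (by intros; ring)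

end SpecAux

open Matrix SpecAux in
/-- Lower bound on `‖B‖` in terms of the singular values of `A`, `C`, `D'`:
`‖B‖ ≥ σ_n(A) σ_{p+1}(C) σ_{M−n−p}(D') / (1 + σ_{p+1}(C) ‖G' L‖ / σ_p(C))`. -/
theorem norm_B_lower_bound (M n p : ℕ) (hn : 0 < n) (hp : 0 < p) (hM : n + p < M)
    (A : Matrix (Fin n) (Fin (n + p)) ℝ) (B : Matrix (Fin n) (Fin (M - n - p)) ℝ)
    (G : Matrix (Fin (M - n)) (Fin (n + p)) ℝ) (D : Matrix (Fin (M - n)) (Fin (M - n - p)) ℝ)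
    (E : Matrix (Fin (n + p)) (Fin n) ℝ) (C : Matrix (Fin (n + p)) (Fin (M - n)) ℝ)
    (H : Matrix (Fin (M - n - p)) (Fin n) ℝ) (F : Matrix (Fin (M - n - p)) (Fin (M - n)) ℝ)
    (hKinv : Matrix.fromBlocks A B G D * Matrix.fromBlocks E C H F = 1)
    (hKinv' : Matrix.fromBlocks E C H F * Matrix.fromBlocks A B G D = 1)
    (hσp : 0 < singularValue C p)
    (L : Matrix (Fin (n + p)) (Fin (M - n)) ℝ) (hL : IsSVDTruncation C L p)
    (hsmall : singularValue C (p + 1) < 1 / specNorm (Matrix.fromBlocks A B G D))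
    (A' : Matrix (Fin n) (Fin (n + p)) ℝ) (G' : Matrix (Fin (M - n)) (Fin (n + p)) ℝ)
    (D' : Matrix (Fin (M - n)) (Fin (M - n - p)) ℝ)
    (hJinv : Matrix.fromBlocks E L H F * Matrix.fromBlocks A' 0 G' D' = 1)
    (hJinv' : Matrix.fromBlocks A' 0 G' D' * Matrix.fromBlocks E L H F = 1) :
    specNorm B ≥
      singularValue A n * singularValue C (p + 1) * singularValue D' (M - n - p) /
        (1 + singularValue C (p + 1) * specNorm (G' * L) / singularValue C p) := by
  obtain ⟨Q, P, S, hQ, hP, hSoff, hSdiag, hC, hLdef⟩ := hL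
  have hQQ : Q * Qᵀ = 1 := mul_eq_one_comm.mp hQ
  have hPP : P * Pᵀ = 1 := mul_eq_one_comm.mp hP
  have hpa : p < n + p := by omega
  have hpb : p < M - n := by omega
  set S' : Matrix (Fin (n + p)) (Fin (M - n)) ℝ :=
    Matrix.of (fun (i : Fin (n + p)) (j : Fin (M - n)) => if (i : ℕ) < p then S i j else 0)
    with hS'
  -- abbreviations
  have hc0pos : 0 < singularValue C p := hσp
  have hc1nn : 0 ≤ singularValue C (p + 1) := singularValue_nonneg _ _
  have hgnn : 0 ≤ specNorm (G' * L) := specNorm_nonneg _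
  have hδnn : 0 ≤ singularValue D' (M - n - p) := singularValue_nonneg _ _
  have hβnn : 0 ≤ specNorm B := specNorm_nonneg _
  have hcs : ∀ i : ℕ, i < p → singularValue C p ≤ singularValue C (i + 1) :=
    fun i hi => singularValue_antitone C (by omega)
  -- block equations
  rw [Matrix.fromBlocks_multiply, ← Matrix.fromBlocks_one] at hKinv
  rw [Matrix.fromBlocks_multiply, ← Matrix.fromBlocks_one] at hJinv
  rw [Matrix.fromBlocks_multiply, ← Matrix.fromBlocks_one] at hJinv'
  have hAC : A * C + B * F = 0 := by
    have h := congrArg Matrix.toBlocks₁₂ hKinv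
    simpa [Matrix.toBlocks_fromBlocks₁₂, -Matrix.fromBlocks_one] using h
  have hEA' : E * A' + L * G' = 1 := by
    have h := congrArg Matrix.toBlocks₁₁ hJinv
    simpa [Matrix.toBlocks_fromBlocks₁₁, -Matrix.fromBlocks_one] using h
  have hLD' : L * D' = 0 := by
    have h := congrArg Matrix.toBlocks₁₂ hJinv
    simpa [Matrix.toBlocks_fromBlocks₁₂, -Matrix.fromBlocks_one] using h
  have hHF : H * A' + F * G' = 0 := by
    have h := congrArg Matrix.toBlocks₂₁ hJinv
    simpa [Matrix.toBlocks_fromBlocks₂₁, -Matrix.fromBlocks_one] using h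
  have hFD' : F * D' = 1 := by
    have h := congrArg Matrix.toBlocks₂₂ hJinv
    simpa [Matrix.toBlocks_fromBlocks₂₂, -Matrix.fromBlocks_one] using h
  have hA'L : A' * L = 0 := by
    have h := congrArg Matrix.toBlocks₁₂ hJinv'
    simpa [Matrix.toBlocks_fromBlocks₁₂, -Matrix.fromBlocks_one] using h
  have hGL : G' * L + D' * F = 1 := by
    have h := congrArg Matrix.toBlocks₂₂ hJinv'
    simpa [Matrix.toBlocks_fromBlocks₂₂, -Matrix.fromBlocks_one] using h
  set N : Matrix (Fin (n + p)) (Fin (M - n)) ℝ := C - L with hN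
  have hACeq : A * C = -(B * F) := eq_neg_of_add_eq_zero_left hAC
  have hBFeq : B * F = -(A * C) := eq_neg_of_add_eq_zero_right hAC
  have hFG' : F * G' = -(H * A') := eq_neg_of_add_eq_zero_right hHF
  have hD'F : D' * F = 1 - G' * L := eq_sub_of_add_eq' hGL
  -- (K1) A*N*D' = -B
  have hAND' : A * N * D' = -B := by
    have h1 : A * N * D' = A * (C * D') - A * (L * D') := by
      simp only [hN, Matrix.sub_mul, Matrix.mul_sub, Matrix.mul_assoc]
    rw [h1, hLD', Matrix.mul_zero, sub_zero, ← Matrix.mul_assoc, hACeq, Matrix.neg_mul,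
      Matrix.mul_assoc, hFD', Matrix.mul_one]
  -- (K4) A*L = -(A*(N*(G'*L)))
  have hALGL : A * (L * (G' * L)) = A * L := by
    have h := congrArg (fun X : Matrix (Fin (n + p)) (Fin (n + p)) ℝ => A * (X * L)) hEA'
    simp only [Matrix.add_mul, Matrix.mul_add, Matrix.one_mul, Matrix.mul_assoc] at h
    rw [hA'L] at h
    simpa [Matrix.mul_zero] using h
  have hACGL : A * (C * (G' * L)) = 0 := by
    have h := congrArg (fun X : Matrix (Fin n) (Fin (M - n)) ℝ => X * (G' * L)) hACeq
    simp only [Matrix.mul_assoc, neg_mul, Matrix.neg_mul] at h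
    have h2 : F * (G' * L) = 0 := by
      rw [← Matrix.mul_assoc, hFG', Matrix.neg_mul, Matrix.mul_assoc, hA'L, Matrix.mul_zero, neg_zero]
    rw [h2] at h
    simpa [Matrix.mul_zero] using h
  have hALeq : A * L = -(A * (N * (G' * L))) := by
    have : A * (N * (G' * L)) = A * (C * (G' * L)) - A * (L * (G' * L)) := by
      rw [hN, Matrix.sub_mul, Matrix.mul_sub]
    rw [this, hACGL, hALGL, zero_sub, neg_neg]
  -- SVD structure pieces
  have hCL : N = Q * ((S - S') * Pᵀ) := by
    rw [hN, hC, hLdef]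
    rw [Matrix.sub_mul, Matrix.mul_sub, Matrix.mul_assoc, Matrix.mul_assoc]
  set T' : Matrix (Fin (M - n)) (Fin (M - n)) ℝ :=
    Matrix.diagonal (fun j : Fin (M - n) => if p ≤ (j : ℕ) then (1:ℝ) else 0) with hT'
  set Pt : Matrix (Fin (M - n)) (Fin (M - n)) ℝ := P * (T' * Pᵀ) with hPt
  have hSS'T' : (S - S') * T' = S - S' := by
    ext i j
    rw [hT', Matrix.mul_diagonal]
    by_cases hj : p ≤ (j : ℕ)
    · rw [if_pos hj, mul_one]
    · rw [if_neg hj, mul_zero]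
      have : (S - S') i j = 0 := by
        rw [Matrix.sub_apply, hS']
        simp only [Matrix.of_apply]
        by_cases hij : (i : ℕ) = (j : ℕ)
        · rw [if_pos (by omega), sub_self]
        · rw [hSoff i j hij]
          simp
      rw [this]
  have hS'T' : S' * T' = 0 := by
    ext i j
    rw [hT', Matrix.mul_diagonal]
    by_cases hj : p ≤ (j : ℕ)
    · rw [if_pos hj, mul_one, hS']
      simp only [Matrix.of_apply]
      by_cases hip : (i : ℕ) < p
      · rw [if_pos hip, hSoff i j (by omega)]; rfl
      · rw [if_neg hip]; rfl
    · rw [if_neg hj, mul_zero]; rfl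
  have hPtP : Pᵀ * Pt = T' * Pᵀ := by
    rw [hPt, ← Matrix.mul_assoc, hP, Matrix.one_mul]
  have hNPt : N * Pt = N := by
    rw [hCL]
    calc Q * ((S - S') * Pᵀ) * Pt = Q * ((S - S') * (Pᵀ * Pt)) := by
          simp only [Matrix.mul_assoc]
    _ = Q * ((S - S') * T' * Pᵀ) := by rw [hPtP, Matrix.mul_assoc]
    _ = Q * ((S - S') * Pᵀ) := by rw [hSS'T']
  have hLPt : L * Pt = 0 := by
    rw [hLdef]
    calc Q * S' * Pᵀ * Pt = Q * (S' * (Pᵀ * Pt)) := by simp only [Matrix.mul_assoc]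
    _ = Q * (S' * T' * Pᵀ) := by rw [hPtP, Matrix.mul_assoc]
    _ = 0 := by rw [hS'T', Matrix.zero_mul, Matrix.mul_zero]
  have hDFPt : D' * (F * Pt) = Pt := by
    rw [← Matrix.mul_assoc, hD'F, Matrix.sub_mul, Matrix.one_mul, Matrix.mul_assoc, hLPt,
      Matrix.mul_zero, sub_zero]
  have hANPt : A * N = -(B * (F * Pt)) := by
    calc A * N = A * N * Pt := by rw [Matrix.mul_assoc, hNPt]
    _ = A * N * (D' * (F * Pt)) := by rw [hDFPt]
    _ = A * N * D' * (F * Pt) := by simp only [Matrix.mul_assoc]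
    _ = -(B * (F * Pt)) := by rw [hAND', Matrix.neg_mul]
  -- contraction bounds
  have hPtv : ∀ v : Fin (M - n) → ℝ, ‖eu (Pt *ᵥ v)‖ ≤ ‖eu v‖ := by
    intro v
    have h1 : Pt *ᵥ v = P *ᵥ (T' *ᵥ (Pᵀ *ᵥ v)) := by
      rw [hPt, ← Matrix.mulVec_mulVec, ← Matrix.mulVec_mulVec]
    rw [h1, norm_mulVec_orth P hP]
    have h2 : ‖eu (T' *ᵥ (Pᵀ *ᵥ v))‖ ≤ ‖eu (Pᵀ *ᵥ v)‖ := by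
      apply eu_norm_le
      simp only [dotProduct, hT', Matrix.mulVec_diagonal]
      apply Finset.sum_le_sum
      intro j _
      by_cases hj : p ≤ (j : ℕ)
      · rw [if_pos hj, one_mul]
      · rw [if_neg hj, zero_mul, zero_mul]
        exact mul_self_nonneg _
    have h3 : ‖eu (Pᵀ *ᵥ v)‖ = ‖eu v‖ := by
      apply norm_mulVec_orth
      rw [Matrix.transpose_transpose]
      exact hPP
    rw [← h3]; exact h2
  have hδFPt : singularValue D' (M - n - p) * specNorm (F * Pt) ≤ 1 := by
    rcases eq_or_lt_of_le hδnn with h0 | hδpos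
    · rw [← h0, zero_mul]; norm_num
    · have hbound : specNorm (F * Pt) ≤ (singularValue D' (M - n - p))⁻¹ := by
        apply specNorm_le_bound _ _ (le_of_lt (inv_pos.mpr hδpos))
        intro v
        have h1 : (F * Pt) *ᵥ v = F *ᵥ (Pt *ᵥ v) := by rw [Matrix.mulVec_mulVec]
        have h2 := sv_card_mulVec D' (F *ᵥ (Pt *ᵥ v))
        rw [Fintype.card_fin] at h2
        have h3 : D' *ᵥ (F *ᵥ (Pt *ᵥ v)) = Pt *ᵥ v := by
          rw [Matrix.mulVec_mulVec, Matrix.mulVec_mulVec, Matrix.mul_assoc, hDFPt]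
        rw [h3] at h2
        have h4 := hPtv v
        rw [h1]
        calc ‖eu (F *ᵥ (Pt *ᵥ v))‖
            = (singularValue D' (M - n - p))⁻¹
              * (singularValue D' (M - n - p) * ‖eu (F *ᵥ (Pt *ᵥ v))‖) := by
              field_simp
        _ ≤ (singularValue D' (M - n - p))⁻¹ * ‖eu v‖ :=
              mul_le_mul_of_nonneg_left (h2.trans h4) (le_of_lt (inv_pos.mpr hδpos))
      calc singularValue D' (M - n - p) * specNorm (F * Pt)
          ≤ singularValue D' (M - n - p) * (singularValue D' (M - n - p))⁻¹ :=
            mul_le_mul_of_nonneg_left hbound hδnn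
      _ = 1 := mul_inv_cancel₀ (ne_of_gt hδpos)
  have hδAN : singularValue D' (M - n - p) * specNorm (A * N) ≤ specNorm B := by
    rw [hANPt, specNorm_neg]
    have h1 : specNorm (B * (F * Pt)) ≤ specNorm B * specNorm (F * Pt) := specNorm_mul_le _ _
    nlinarith [specNorm_nonneg (F * Pt), specNorm_nonneg (B * (F * Pt)),
      mul_le_mul_of_nonneg_left h1 hδnn, mul_le_mul_of_nonneg_left hδFPt hβnn]
  -- vectors x = P e_p, q = Q e_p
  set xv : Fin (M - n) → ℝ := P *ᵥ Pi.single ⟨p, hpb⟩ 1 with hxv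
  set qv : Fin (n + p) → ℝ := Q *ᵥ Pi.single ⟨p, hpa⟩ 1 with hqv
  have hPx : Pᵀ *ᵥ xv = Pi.single ⟨p, hpb⟩ 1 := by
    rw [hxv, Matrix.mulVec_mulVec, hP, Matrix.one_mulVec]
  have hSx : S *ᵥ Pi.single ⟨p, hpb⟩ 1
      = singularValue C (p + 1) • (Pi.single (⟨p, hpa⟩ : Fin (n + p)) (1:ℝ) : Fin (n + p) → ℝ) := by
    rw [Matrix.mulVec_single]
    funext i
    show S i ⟨p, hpb⟩ * 1 = _
    by_cases h : (i : ℕ) = p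
    · have hi : i = ⟨p, hpa⟩ := Fin.ext h
      subst hi
      rw [hSdiag _ _ rfl, mul_one, Pi.smul_apply, Pi.single_eq_same, smul_eq_mul, mul_one]
    · rw [mul_one, hSoff i _ (by simpa using h), Pi.smul_apply,
        Pi.single_eq_of_ne (fun hc => h (by simpa [Fin.ext_iff] using hc)), smul_zero]
  have hCx : C *ᵥ xv = singularValue C (p + 1) • qv := by
    conv_lhs => rw [hC]
    rw [← Matrix.mulVec_mulVec, hPx, ← Matrix.mulVec_mulVec, hSx, Matrix.mulVec_smul, ← hqv]
  have hS'x : S' *ᵥ Pi.single ⟨p, hpb⟩ 1 = 0 := by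
    rw [Matrix.mulVec_single]
    funext i
    show S' i ⟨p, hpb⟩ * 1 = _
    rw [hS']
    simp only [Matrix.of_apply, mul_one]
    by_cases h : (i : ℕ) < p
    · rw [if_pos h, hSoff i _ (by intro hc; simp at hc; omega)]; rfl
    · rw [if_neg h]; rfl
  have hLx : L *ᵥ xv = 0 := by
    rw [hLdef, ← Matrix.mulVec_mulVec, hPx, ← Matrix.mulVec_mulVec, hS'x, Matrix.mulVec_zero]
  have hxnorm : ‖eu xv‖ = 1 := by
    rw [hxv, norm_mulVec_orth P hP]
    apply eu_norm_one_of
    simp [dotProduct, Pi.single_apply]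
  have hqnorm : ‖eu qv‖ = 1 := by
    rw [hqv, norm_mulVec_orth Q hQ]
    apply eu_norm_one_of
    simp [dotProduct, Pi.single_apply]
  have hBFx : (B * F) *ᵥ xv = -(singularValue C (p + 1) • (A *ᵥ qv)) := by
    rw [hBFeq, Matrix.neg_mulVec, ← Matrix.mulVec_mulVec, hCx, Matrix.mulVec_smul]
  have hAqB : singularValue C (p + 1) * singularValue D' (M - n - p) * ‖eu (A *ᵥ qv)‖
      ≤ specNorm B := by
    have e1 : singularValue C (p + 1) * ‖eu (A *ᵥ qv)‖ = ‖eu ((B * F) *ᵥ xv)‖ := by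
      rw [hBFx]
      have h1 : eu (-(singularValue C (p + 1) • (A *ᵥ qv)))
          = -(singularValue C (p + 1) • eu (A *ᵥ qv)) := rfl
      rw [h1, norm_neg, norm_smul, Real.norm_eq_abs, abs_of_nonneg hc1nn]
    have e2 : ‖eu ((B * F) *ᵥ xv)‖ ≤ specNorm B * ‖eu (F *ᵥ xv)‖ := by
      rw [← Matrix.mulVec_mulVec]; exact norm_mulVec_le _ _
    have e3 : singularValue D' (M - n - p) * ‖eu (F *ᵥ xv)‖ ≤ 1 := by
      have h2 := sv_card_mulVec D' (F *ᵥ xv)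
      rw [Fintype.card_fin] at h2
      have h3 : D' *ᵥ (F *ᵥ xv) = xv := by
        rw [Matrix.mulVec_mulVec, hD'F, Matrix.sub_mulVec, Matrix.one_mulVec,
          ← Matrix.mulVec_mulVec, hLx, Matrix.mulVec_zero, sub_zero]
      rw [h3, hxnorm] at h2
      exact h2
    nlinarith [norm_nonneg (eu (F *ᵥ xv)), norm_nonneg (eu (A *ᵥ qv)),
      mul_le_mul_of_nonneg_left e2 hδnn, mul_le_mul_of_nonneg_left e3 hβnn]
  -- the pseudoinverse piece and the projector
  set Spl : Matrix (Fin (M - n)) (Fin (n + p)) ℝ :=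
    Matrix.of fun (i : Fin (M - n)) (j : Fin (n + p)) =>
      if (i : ℕ) = (j : ℕ) ∧ (i : ℕ) < p then (singularValue C ((i : ℕ) + 1))⁻¹ else 0
    with hSpl
  set Wm : Matrix (Fin (M - n)) (Fin (n + p)) ℝ := P * (Spl * Qᵀ) with hWm
  have hWv : ∀ v : Fin (n + p) → ℝ,
      ‖eu (Wm *ᵥ v)‖ ≤ (singularValue C p)⁻¹ * ‖eu v‖ := by
    intro v
    have h0 : Wm *ᵥ v = P *ᵥ (Spl *ᵥ (Qᵀ *ᵥ v)) := by
      rw [hWm, ← Matrix.mulVec_mulVec, ← Matrix.mulVec_mulVec]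
    rw [h0, norm_mulVec_orth P hP]
    have h1 := spl_mulVec_le (bb := M - n) (singularValue C) p (singularValue C p) hc0pos
      hcs (le_of_lt hpa) (Qᵀ *ᵥ v)
    rw [← hSpl] at h1
    have h2 : ‖eu (Qᵀ *ᵥ v)‖ = ‖eu v‖ := by
      apply norm_mulVec_orth
      rw [Matrix.transpose_transpose]; exact hQQ
    rwa [h2] at h1
  have hWnorm : specNorm Wm ≤ (singularValue C p)⁻¹ :=
    specNorm_le_bound _ _ (inv_nonneg.mpr (le_of_lt hc0pos)) hWv
  set T0 : Matrix (Fin (n + p)) (Fin (n + p)) ℝ :=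
    Matrix.diagonal (fun i => if (i : ℕ) < p then (1:ℝ) else 0) with hT0
  have hS'Spl : S' * Spl = T0 := by
    ext i k
    rw [Matrix.mul_apply]
    by_cases hip : (i : ℕ) < p
    · have hib : (i : ℕ) < M - n := by omega
      rw [Finset.sum_eq_single (⟨(i : ℕ), hib⟩ : Fin (M - n))]
      · rw [hS', hSpl]
        simp only [Matrix.of_apply]
        rw [if_pos hip]
        by_cases hik : (i : ℕ) = (k : ℕ)
        · rw [if_pos ⟨by simpa using hik, by simpa using hip⟩,
            hSdiag i ⟨(i : ℕ), hib⟩ (by simp), hT0]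
          have hki : i = k := Fin.ext hik
          subst hki
          rw [Matrix.diagonal_apply_eq, if_pos hip]
          simpa using mul_inv_cancel₀ (ne_of_gt (lt_of_lt_of_le hc0pos (hcs _ hip)))
        · rw [if_neg (fun hc => hik (by simpa using hc.1)), mul_zero, hT0,
            Matrix.diagonal_apply_ne _ (fun hc => hik (by rw [hc]))]
      · intro j _ hj
        rw [hS', hSpl]
        simp only [Matrix.of_apply]
        rw [if_pos hip, hSoff i j (fun hc => hj (Fin.ext (by simpa using hc.symm))), zero_mul]
      · intro hmem; exact absurd (Finset.mem_univ _) hmem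
    · have hz : ∀ j : Fin (M - n), S' i j * Spl j k = 0 := by
        intro j; rw [hS']; simp only [Matrix.of_apply]; rw [if_neg hip, zero_mul]
      rw [Finset.sum_eq_zero (fun j _ => hz j), hT0]
      by_cases hik : i = k
      · subst hik; rw [Matrix.diagonal_apply_eq, if_neg hip]
      · rw [Matrix.diagonal_apply_ne _ hik]
  set T1 : Matrix (Fin (n + p)) (Fin (n + p)) ℝ :=
    Matrix.diagonal (fun i => if (i : ℕ) = p then (1:ℝ) else 0) with hT1
  have hq' : ∀ i, qv i = Q i ⟨p, hpa⟩ := by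
    intro i; rw [hqv, Matrix.mulVec_single]; simp
  have hqvO : vecMulVec qv qv = Q * (T1 * Qᵀ) := by
    ext i j
    rw [vecMulVec_apply, Matrix.mul_apply]
    have hentry : ∀ k : Fin (n + p),
        Q i k * (T1 * Qᵀ) k j = Q i k * ((if (k : ℕ) = p then (1:ℝ) else 0) * Q j k) := by
      intro k
      rw [hT1]
      rw [Matrix.diagonal_mul, Matrix.transpose_apply]
    simp only [hentry]
    rw [Finset.sum_eq_single (⟨p, hpa⟩ : Fin (n + p))]
    · rw [if_pos rfl, one_mul, hq' i, hq' j]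
    · intro k _ hk
      rw [if_neg (fun hc => hk (Fin.ext hc)), zero_mul, mul_zero]
    · intro hmem; exact absurd (Finset.mem_univ _) hmem
  set Pim : Matrix (Fin (n + p)) (Fin (n + p)) ℝ := L * Wm + vecMulVec qv qv with hPim
  have hLWm : L * Wm = Q * (T0 * Qᵀ) := by
    rw [hLdef, hWm]
    calc Q * S' * Pᵀ * (P * (Spl * Qᵀ)) = Q * (S' * ((Pᵀ * P) * (Spl * Qᵀ))) := by
          simp only [Matrix.mul_assoc]
    _ = Q * (S' * Spl * Qᵀ) := by rw [hP, Matrix.one_mul, Matrix.mul_assoc]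
    _ = Q * (T0 * Qᵀ) := by rw [hS'Spl]
  set Td : Matrix (Fin (n + p)) (Fin (n + p)) ℝ :=
    Matrix.diagonal (fun i => if (i : ℕ) ≤ p then (0:ℝ) else 1) with hTd
  have hTdeq : Td = 1 - T0 - T1 := by
    rw [hTd, hT0, hT1]
    ext i j
    simp only [Matrix.sub_apply, Matrix.diagonal_apply, Matrix.one_apply]
    by_cases hij : i = j
    · simp only [if_pos hij]
      by_cases h1 : (i : ℕ) < p
      · rw [if_pos (by omega : (i : ℕ) ≤ p), if_pos h1, if_neg (by omega)]; norm_num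
      · by_cases h2 : (i : ℕ) = p
        · rw [if_pos (by omega : (i : ℕ) ≤ p), if_neg h1, if_pos h2]; norm_num
        · rw [if_neg (by omega), if_neg h1, if_neg h2]; norm_num
    · simp [hij]
  have hone : (1 : Matrix (Fin (n + p)) (Fin (n + p)) ℝ) - Pim = Q * (Td * Qᵀ) := by
    have h0 : Q * (Td * Qᵀ) = Q * Qᵀ - L * Wm - vecMulVec qv qv := by
      rw [hTdeq, Matrix.sub_mul, Matrix.sub_mul, Matrix.one_mul, Matrix.mul_sub, Matrix.mul_sub,
        ← hLWm, ← hqvO]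
    rw [h0, hQQ, hPim, sub_sub]
  have hrankA : (A * ((1 : Matrix (Fin (n + p)) (Fin (n + p)) ℝ) - Pim)).rank ≤ n - 1 := by
    rw [hone]
    refine le_trans (Matrix.rank_mul_le_right _ _) ?_
    refine le_trans (Matrix.rank_mul_le_right _ _) ?_
    refine le_trans (Matrix.rank_mul_le_left _ _) ?_
    rw [hTd, Matrix.rank_diagonal]
    have hcc : Fintype.card {i : Fin (n + p) // (if (i : ℕ) ≤ p then (0:ℝ) else 1) ≠ 0}
        = Fintype.card {i : Fin (n + p) // p < (i : ℕ)} := by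
      apply Fintype.card_congr
      apply Equiv.subtypeEquivRight
      intro i
      by_cases h : (i : ℕ) ≤ p
      · simp only [if_pos h]
        constructor
        · intro hc; exact absurd rfl hc
        · intro hc; omega
      · simp only [if_neg h]
        constructor
        · intro _; omega
        · intro _; norm_num
    rw [hcc, card_val_gt]
    omega
  have hsvA : singularValue A n ≤ specNorm (A * Pim) := by
    have h := singularValue_le A n (A * ((1 : Matrix (Fin (n + p)) (Fin (n + p)) ℝ) - Pim)) hrankA
    have h2 : A - A * (1 - Pim) = A * Pim := by
      rw [Matrix.mul_sub, Matrix.mul_one, sub_sub_cancel]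
    rwa [h2] at h
  have hAPi : specNorm (A * Pim)
      ≤ specNorm (A * N) * specNorm (G' * L) * (singularValue C p)⁻¹ + ‖eu (A *ᵥ qv)‖ := by
    have hsplit : A * Pim = A * (L * Wm) + vecMulVec (A *ᵥ qv) qv := by
      rw [hPim, Matrix.mul_add, SpecAux.mul_vecMulVec]
    rw [hsplit]
    refine le_trans (specNorm_add_le _ _) ?_
    have hterm2 : specNorm (vecMulVec (A *ᵥ qv) qv) ≤ ‖eu (A *ᵥ qv)‖ := by
      have h := specNorm_vecMulVec_le (A *ᵥ qv) qv
      rwa [hqnorm, mul_one] at h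
    have hterm1 : specNorm (A * (L * Wm))
        ≤ specNorm (A * N) * specNorm (G' * L) * (singularValue C p)⁻¹ := by
      have e1 : A * (L * Wm) = -(A * (N * (G' * L)) * Wm) := by
        rw [← Matrix.mul_assoc, hALeq, Matrix.neg_mul]
      rw [e1, specNorm_neg]
      have e2 : A * (N * (G' * L)) * Wm = (A * N) * ((G' * L) * Wm) := by
        simp only [Matrix.mul_assoc]
      rw [e2]
      refine le_trans (specNorm_mul_le _ _) ?_
      have e3 : specNorm ((G' * L) * Wm) ≤ specNorm (G' * L) * (singularValue C p)⁻¹ := by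
        refine le_trans (specNorm_mul_le _ _) ?_
        exact mul_le_mul_of_nonneg_left hWnorm (specNorm_nonneg _)
      calc specNorm (A * N) * specNorm ((G' * L) * Wm)
          ≤ specNorm (A * N) * (specNorm (G' * L) * (singularValue C p)⁻¹) :=
            mul_le_mul_of_nonneg_left e3 (specNorm_nonneg _)
      _ = specNorm (A * N) * specNorm (G' * L) * (singularValue C p)⁻¹ := by ring
    linarith [hterm1, hterm2]
  -- final assembly
  have key : singularValue A n
      ≤ specNorm (A * N) * specNorm (G' * L) * (singularValue C p)⁻¹ + ‖eu (A *ᵥ qv)‖ :=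
    le_trans hsvA hAPi
  have hdpos : 0 < 1 + singularValue C (p + 1) * specNorm (G' * L) / singularValue C p := by
    have : 0 ≤ singularValue C (p + 1) * specNorm (G' * L) / singularValue C p :=
      div_nonneg (mul_nonneg hc1nn hgnn) (le_of_lt hc0pos)
    linarith
  rw [ge_iff_le, div_le_iff₀ hdpos]
  have hcd : 0 ≤ singularValue C (p + 1) * singularValue D' (M - n - p) :=
    mul_nonneg hc1nn hδnn
  have m1 : singularValue A n * (singularValue C (p + 1) * singularValue D' (M - n - p))
      ≤ (specNorm (A * N) * specNorm (G' * L) * (singularValue C p)⁻¹ + ‖eu (A *ᵥ qv)‖)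
        * (singularValue C (p + 1) * singularValue D' (M - n - p)) :=
    mul_le_mul_of_nonneg_right key hcd
  have hcg : 0 ≤ singularValue C (p + 1) * specNorm (G' * L) * (singularValue C p)⁻¹ :=
    mul_nonneg (mul_nonneg hc1nn hgnn) (inv_nonneg.mpr (le_of_lt hc0pos))
  have m2 : singularValue D' (M - n - p) * specNorm (A * N)
        * (singularValue C (p + 1) * specNorm (G' * L) * (singularValue C p)⁻¹)
      ≤ specNorm B * (singularValue C (p + 1) * specNorm (G' * L) * (singularValue C p)⁻¹) :=
    mul_le_mul_of_nonneg_right hδAN hcg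
  have hdiv : singularValue C (p + 1) * specNorm (G' * L) / singularValue C p
      = singularValue C (p + 1) * specNorm (G' * L) * (singularValue C p)⁻¹ :=
    div_eq_mul_inv _ _
  rw [hdiv]
  linarith [m1, m2, hAqB]
end
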